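/- Suppose E⁺_{r,B} < ∞. Then the bottom of the spectrum of the operator f ↦ f − P^B_r f on L²(μ_r)-functions vanishing outside B is at least c/E⁺_{r,B} for a constant c > 0 independent of r, R and x₀: concretely, for every f ∈ L²(X, μ_r) with f = 0 μ-a.e. outside B, one has ⟨f, f − P^B_r f⟩_{L²(μ_r)} ≥ (c/E⁺_{r,B})·‖f‖²_{L²(μ_r)}. -/

import Mathlib

/- STATEMENT 17: In the setting of r-step random walks on a compact connected metric
   measure space (X,d,μ) with more than one point and μ of full support: there is a
   constant c > 0, independent of r, R and x₀, such that whenever r > 0, the closed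
   ball B = B_R[x₀] has non-empty complement, and E⁺_{r,B} < ∞, then for every
   f ∈ L²(μ_r) vanishing μ-a.e. outside B,
   ⟨f, f − P^B_r f⟩_{L²(μ_r)} ≥ (c / E⁺_{r,B}) · ‖f‖²_{L²(μ_r)}. -/

open MeasureTheory Metric ProbabilityTheory
open scoped ENNReal

/-- Exit time from `B` of a discrete path: `τ_B(ω) = inf { k : ω k ∉ B }` (∞ if none). -/
noncomputable def exitTime {X : Type*} (B : Set X) (ω : ℕ → X) : ℝ≥0∞ :=
  ⨅ (k : ℕ) (_ : ω k ∉ B), (k : ℝ≥0∞)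

/-- `E_B(x) = 𝔼^x τ_B` for the walk with trajectory kernel `κ`. -/
noncomputable def meanExit {X : Type*} [MeasurableSpace X]
    (κ : Kernel X (ℕ → X)) (B : Set X) (x : X) : ℝ≥0∞ :=
  ∫⁻ ω, exitTime B ω ∂(κ x)

/-- `E⁺_B = sup_{y ∈ B} E_B(y)`. -/
noncomputable def maxExit {X : Type*} [MeasurableSpace X]
    (κ : Kernel X (ℕ → X)) (B : Set X) : ℝ≥0∞ :=
  ⨆ y ∈ B, meanExit κ B y

/-- The killed Markov operator `P^B_r f(x) = 1_B(x)·(1/μ(B_r(x)))·∫_{B_r(x)∩B} f dμ`. -/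
noncomputable def killedOp {X : Type*} [MetricSpace X] [MeasurableSpace X]
    (μ : Measure X) (r : ℝ) (B : Set X) (f : X → ℝ) : X → ℝ :=
  B.indicator fun x => (μ (Metric.ball x r)).toReal⁻¹ * ∫ y in Metric.ball x r ∩ B, f y ∂μ

/-- The measure `μ_r` with density `x ↦ μ(B_r(x))` with respect to `μ`. -/
noncomputable def muR {X : Type*} [MetricSpace X] [MeasurableSpace X]
    (μ : Measure X) (r : ℝ) : Measure X :=
  μ.withDensity fun x => μ (Metric.ball x r)

section Paths
variable {X : Type*} [MeasurableSpace X] (B : Set X)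

lemma measurableSet_allIn (hB : MeasurableSet B) (k : ℕ) :
    MeasurableSet {ω : ℕ → X | ∀ j ≤ k, ω j ∈ B} := by
  have h : {ω : ℕ → X | ∀ j ≤ k, ω j ∈ B} = ⋂ j ∈ Set.Iic k, (fun ω : ℕ → X => ω j) ⁻¹' B := by
    ext ω; simp [Set.mem_iInter]
  rw [h]
  exact MeasurableSet.biInter (Set.to_countable _) fun j _ => (measurable_pi_apply j) hB

lemma exitTime_eq_tsum (ω : ℕ → X) :
    exitTime B ω = ∑' k : ℕ, ({ω' : ℕ → X | ∀ j ≤ k, ω' j ∈ B}).indicator 1 ω := by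
  classical
  by_cases hex : ∃ k, ω k ∉ B
  · set m := Nat.find hex with hm
    have hspec : ω m ∉ B := Nat.find_spec hex
    have hmin : ∀ k < m, ω k ∈ B := by
      intro k hk
      by_contra h
      exact absurd (Nat.find_le h) (not_le.mpr hk)
    have hval : ∀ k, ({ω' : ℕ → X | ∀ j ≤ k, ω' j ∈ B}).indicator (1 : (ℕ → X) → ℝ≥0∞) ω
        = if k < m then 1 else 0 := by
      intro k
      by_cases hk : k < m
      · rw [Set.indicator_of_mem (show ω ∈ {ω' : ℕ → X | ∀ j ≤ k, ω' j ∈ B} from fun j hj => hmin j (lt_of_le_of_lt hj hk)), if_pos hk]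
        rfl
      · rw [Set.indicator_of_notMem (show ω ∉ {ω' : ℕ → X | ∀ j ≤ k, ω' j ∈ B} from fun h => hspec (h m (not_lt.mp hk))), if_neg hk]
    have hsum : ∑' k : ℕ, ({ω' : ℕ → X | ∀ j ≤ k, ω' j ∈ B}).indicator (1 : (ℕ → X) → ℝ≥0∞) ω
        = m := by
      rw [tsum_congr hval, tsum_eq_sum (s := Finset.range m)
        (fun k hk => if_neg (by simpa using hk))]
      rw [Finset.sum_congr rfl (fun k hk => if_pos (Finset.mem_range.mp hk)),
        Finset.sum_const, Finset.card_range, nsmul_eq_mul, mul_one]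
    rw [hsum]
    refine le_antisymm (iInf₂_le m hspec) (le_iInf₂ fun k hk => ?_)
    exact_mod_cast Nat.find_min' hex hk
  · push_neg at hex
    have h1 : exitTime B ω = ⊤ := by simp [exitTime, hex]
    have h2 : ∀ k : ℕ, ({ω' : ℕ → X | ∀ j ≤ k, ω' j ∈ B}).indicator (1 : (ℕ → X) → ℝ≥0∞) ω
        = 1 := fun k => Set.indicator_of_mem (show ω ∈ {ω' : ℕ → X | ∀ j ≤ k, ω' j ∈ B} from fun j _ => hex j) _
    rw [h1, tsum_congr h2, ENNReal.tsum_const_eq_top_of_ne_zero one_ne_zero]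

lemma meanExit_eq_tsum (κ : Kernel X (ℕ → X)) (hB : MeasurableSet B) (x : X) :
    meanExit κ B x = ∑' k : ℕ, κ x {ω : ℕ → X | ∀ j ≤ k, ω j ∈ B} := by
  unfold meanExit
  rw [lintegral_congr (exitTime_eq_tsum B), lintegral_tsum
    (fun k => (measurable_one.indicator (measurableSet_allIn B hB k)).aemeasurable)]
  exact tsum_congr fun k => lintegral_indicator_one (measurableSet_allIn B hB k)

end Paths
section Walk
variable {X : Type*} [MetricSpace X] [MeasurableSpace X] [BorelSpace X]
  (μ : Measure X) [IsFiniteMeasure μ] [μ.IsOpenPosMeasure]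
  (κ : Kernel X (ℕ → X)) [IsMarkovKernel κ] (r : ℝ) {B : Set X}

lemma compl_start_null (hstart : ∀ x : X, κ x {ω | ω 0 = x} = 1) (x : X) :
    κ x {ω : ℕ → X | ω 0 = x}ᶜ = 0 := by
  have hms : MeasurableSet {ω : ℕ → X | ω 0 = x} := by
    have : {ω : ℕ → X | ω 0 = x} = (fun ω : ℕ → X => ω 0) ⁻¹' {x} := by
      ext ω; simp
    rw [this]
    exact (measurable_pi_apply 0) (measurableSet_singleton x)
  rw [measure_compl hms (measure_ne_top _ _), hstart x, measure_univ, tsub_self]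

lemma walk_zero_off (hstart : ∀ x : X, κ x {ω | ω 0 = x} = 1) {x : X} (hx : x ∉ B) (k : ℕ) :
    κ x {ω : ℕ → X | ∀ j ≤ k, ω j ∈ B} = 0 := by
  refine measure_mono_null (fun ω hω => ?_) (compl_start_null κ hstart x)
  intro h0
  have : ω 0 = x := h0
  exact hx (this ▸ hω 0 (Nat.zero_le _))

lemma walk_inter_start (hstart : ∀ x : X, κ x {ω | ω 0 = x} = 1) {x : X} (hx : x ∈ B)
    (T : Set (ℕ → X)) : κ x ({ω : ℕ → X | ω 0 ∈ B} ∩ T) = κ x T := by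
  refine le_antisymm (measure_mono Set.inter_subset_right) ?_
  have hd : κ x (T \ {ω : ℕ → X | ω 0 ∈ B}) = 0 := by
    refine measure_mono_null (fun ω hω => ?_) (compl_start_null κ hstart x)
    intro h0
    have h0' : ω 0 = x := h0
    exact hω.2 (show ω 0 ∈ B from h0' ▸ hx)
  calc κ x T ≤ κ x (T ∩ {ω : ℕ → X | ω 0 ∈ B}) + κ x (T \ {ω : ℕ → X | ω 0 ∈ B}) :=
        measure_le_inter_add_diff _ _ _
    _ = κ x ({ω : ℕ → X | ω 0 ∈ B} ∩ T) := by rw [hd, add_zero, Set.inter_comm]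

lemma walk_u_zero (hstart : ∀ x : X, κ x {ω | ω 0 = x} = 1) (x : X) :
    κ x {ω : ℕ → X | ∀ j ≤ 0, ω j ∈ B} = B.indicator 1 x := by
  by_cases hx : x ∈ B
  · rw [Set.indicator_of_mem hx]
    refine le_antisymm prob_le_one ?_
    calc (1 : ℝ≥0∞) = κ x {ω | ω 0 = x} := (hstart x).symm
      _ ≤ κ x {ω : ℕ → X | ∀ j ≤ 0, ω j ∈ B} := by
          refine measure_mono fun ω hω => ?_
          intro j hj
          rw [Nat.le_zero.mp hj, hω]
          exact hx
  · rw [Set.indicator_of_notMem hx]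
    exact walk_zero_off κ hstart hx 0

lemma walk_u_succ (hB : MeasurableSet B)
    (hstart : ∀ x : X, κ x {ω | ω 0 = x} = 1)
    (hshift : ∀ (x : X) (S : Set (ℕ → X)), MeasurableSet S →
      κ x ((fun (ω : ℕ → X) (n : ℕ) => ω (n + 1)) ⁻¹' S) =
        (μ (Metric.ball x r))⁻¹ * ∫⁻ y in Metric.ball x r, κ y S ∂μ)
    (k : ℕ) (x : X) :
    κ x {ω : ℕ → X | ∀ j ≤ k + 1, ω j ∈ B} =
      B.indicator (fun x => (μ (Metric.ball x r))⁻¹ *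
        ∫⁻ y in Metric.ball x r, κ y {ω : ℕ → X | ∀ j ≤ k, ω j ∈ B} ∂μ) x := by
  have hdec : {ω : ℕ → X | ∀ j ≤ k + 1, ω j ∈ B} =
      {ω : ℕ → X | ω 0 ∈ B} ∩
        ((fun (ω : ℕ → X) (n : ℕ) => ω (n + 1)) ⁻¹' {ω : ℕ → X | ∀ j ≤ k, ω j ∈ B}) := by
    ext ω
    constructor
    · intro h
      exact ⟨h 0 (Nat.zero_le _), fun j hj => h (j + 1) (Nat.succ_le_succ hj)⟩
    · rintro ⟨h0, hs⟩ j hj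
      cases j with
      | zero => exact h0
      | succ i => exact hs i (Nat.succ_le_succ_iff.mp hj)
  by_cases hx : x ∈ B
  · rw [Set.indicator_of_mem hx, hdec, walk_inter_start κ hstart hx,
      hshift x _ (measurableSet_allIn B hB k)]
  · rw [Set.indicator_of_notMem hx]
    exact walk_zero_off κ hstart hx (k + 1)

end Walk
section WalkT
variable {X : Type*} [MetricSpace X] [MeasurableSpace X] [BorelSpace X]
  (μ : Measure X) [IsFiniteMeasure μ] [μ.IsOpenPosMeasure]
  (κ : Kernel X (ℕ → X)) [IsMarkovKernel κ] (r : ℝ) {B : Set X}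

lemma walk_T_meas (hB : MeasurableSet B) :
    Measurable fun x => ∑' k : ℕ, κ x {ω : ℕ → X | ∀ j ≤ k, ω j ∈ B} :=
  Measurable.ennreal_tsum fun k => κ.measurable_coe (measurableSet_allIn B hB k)

lemma walk_T_zero (hstart : ∀ x : X, κ x {ω | ω 0 = x} = 1) {x : X} (hx : x ∉ B) :
    ∑' k : ℕ, κ x {ω : ℕ → X | ∀ j ≤ k, ω j ∈ B} = 0 := by
  simp [walk_zero_off κ hstart hx]

lemma walk_T_one (hstart : ∀ x : X, κ x {ω | ω 0 = x} = 1) {x : X} (hx : x ∈ B) :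
    1 ≤ ∑' k : ℕ, κ x {ω : ℕ → X | ∀ j ≤ k, ω j ∈ B} := by
  have h0 : κ x {ω : ℕ → X | ∀ j ≤ 0, ω j ∈ B} = 1 := by
    rw [walk_u_zero κ hstart x, Set.indicator_of_mem hx]; rfl
  calc (1 : ℝ≥0∞) = κ x {ω : ℕ → X | ∀ j ≤ 0, ω j ∈ B} := h0.symm
    _ ≤ _ := ENNReal.le_tsum 0

set_option maxHeartbeats 1000000 in
lemma walk_T_rec (hB : MeasurableSet B) (hr : 0 < r)
    (hstart : ∀ x : X, κ x {ω | ω 0 = x} = 1)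
    (hshift : ∀ (x : X) (S : Set (ℕ → X)), MeasurableSet S →
      κ x ((fun (ω : ℕ → X) (n : ℕ) => ω (n + 1)) ⁻¹' S) =
        (μ (Metric.ball x r))⁻¹ * ∫⁻ y in Metric.ball x r, κ y S ∂μ)
    {x : X} (hx : x ∈ B) :
    μ (Metric.ball x r) * ∑' k : ℕ, κ x {ω : ℕ → X | ∀ j ≤ k, ω j ∈ B} =
      μ (Metric.ball x r) +
        ∫⁻ y in Metric.ball x r, ∑' k : ℕ, κ y {ω : ℕ → X | ∀ j ≤ k, ω j ∈ B} ∂μ := by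
  have hg0 : μ (Metric.ball x r) ≠ 0 := (Metric.measure_ball_pos μ x hr).ne'
  have hgt : μ (Metric.ball x r) ≠ ⊤ := measure_ne_top _ _
  have hsplit : ∑' k : ℕ, κ x {ω : ℕ → X | ∀ j ≤ k, ω j ∈ B} =
      1 + (μ (Metric.ball x r))⁻¹ *
        ∫⁻ y in Metric.ball x r, ∑' k : ℕ, κ y {ω : ℕ → X | ∀ j ≤ k, ω j ∈ B} ∂μ := by
    rw [tsum_eq_zero_add' ENNReal.summable]
    have h0 : κ x {ω : ℕ → X | ∀ j ≤ 0, ω j ∈ B} = 1 := by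
      rw [walk_u_zero κ hstart x, Set.indicator_of_mem hx]; rfl
    have hsucc : ∀ k : ℕ, κ x {ω : ℕ → X | ∀ j ≤ k + 1, ω j ∈ B} =
        (μ (Metric.ball x r))⁻¹ *
          ∫⁻ y in Metric.ball x r, κ y {ω : ℕ → X | ∀ j ≤ k, ω j ∈ B} ∂μ := by
      intro k
      rw [walk_u_succ μ κ r hB hstart hshift k x, Set.indicator_of_mem hx]
    rw [h0, tsum_congr hsucc, ENNReal.tsum_mul_left,
      ← lintegral_tsum fun k => (κ.measurable_coe (measurableSet_allIn B hB k)).aemeasurable]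
  rw [hsplit, mul_add, mul_one, ← mul_assoc, ENNReal.mul_inv_cancel hg0 hgt, one_mul]

lemma walk_T_le_maxExit (hB : MeasurableSet B) {x : X} (hx : x ∈ B) :
    ∑' k : ℕ, κ x {ω : ℕ → X | ∀ j ≤ k, ω j ∈ B} ≤ maxExit κ B := by
  rw [← meanExit_eq_tsum B κ hB x]
  exact le_biSup _ hx

end WalkT
section AMGM

private lemma amgm_aux (a b s t : ℝ) (hs : 1 ≤ s) (ht : 1 ≤ t) :
    a * b ≤ (a ^ 2 * (t / s) + b ^ 2 * (s / t)) / 2 := by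
  have hs0 : 0 < s := lt_of_lt_of_le one_pos hs
  have ht0 : 0 < t := lt_of_lt_of_le one_pos ht
  have hid : a ^ 2 * (t / s) + b ^ 2 * (s / t) - 2 * (a * b) = (a * t - b * s) ^ 2 / (s * t) := by
    field_simp
    ring
  have h2 : 0 ≤ (a * t - b * s) ^ 2 / (s * t) :=
    div_nonneg (sq_nonneg _) (le_of_lt (mul_pos hs0 ht0))
  linarith [hid ▸ h2]

end AMGM

theorem statement17 {X : Type*} [MetricSpace X] [CompactSpace X] [ConnectedSpace X]
    [Nontrivial X] [MeasurableSpace X] [BorelSpace X]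
    (μ : Measure X) [μ.IsOpenPosMeasure] [IsFiniteMeasure μ]
    (P : ℝ → Kernel X (ℕ → X)) (hmk : ∀ r : ℝ, IsMarkovKernel (P r))
    (hstart : ∀ (r : ℝ), 0 < r → ∀ x : X, P r x {ω | ω 0 = x} = 1)
    (hshift : ∀ (r : ℝ), 0 < r → ∀ (x : X) (S : Set (ℕ → X)), MeasurableSet S →
      P r x ((fun (ω : ℕ → X) (n : ℕ) => ω (n + 1)) ⁻¹' S) =
        (μ (Metric.ball x r))⁻¹ * ∫⁻ y in Metric.ball x r, P r y S ∂μ) :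
    ∃ c : ℝ, 0 < c ∧ ∀ (r R : ℝ) (x₀ : X), 0 < r →
      ((Metric.closedBall x₀ R)ᶜ).Nonempty →
      maxExit (P r) (Metric.closedBall x₀ R) ≠ ⊤ →
      ∀ f : X → ℝ, MemLp f 2 (muR μ r) →
        (∀ᵐ x ∂μ, x ∉ Metric.closedBall x₀ R → f x = 0) →
        c / (maxExit (P r) (Metric.closedBall x₀ R)).toReal * ∫ x, f x ^ 2 ∂(muR μ r) ≤
          ∫ x, f x * (f x - killedOp μ r (Metric.closedBall x₀ R) f x) ∂(muR μ r) := by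
  classical
  refine ⟨1, one_pos, ?_⟩
  intro r R x₀ hr hcompl hMtop f hMem hvan
  set B : Set X := Metric.closedBall x₀ R with hBdef
  have hB : MeasurableSet B := measurableSet_closedBall
  haveI := hmk r
  by_cases hBne : B.Nonempty
  swap
  · -- degenerate case : B empty
    rw [Set.not_nonempty_iff_eq_empty] at hBne
    have hM : maxExit (P r) B = 0 := by rw [maxExit, hBne]; simp
    have h2 : ∫ x, f x * (f x - killedOp μ r B f x) ∂(muR μ r)
        = ∫ x, f x * f x ∂(muR μ r) := by
      refine integral_congr_ae (Filter.Eventually.of_forall fun x => ?_)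
      rw [killedOp, hBne]
      simp
    rw [h2, hM]
    simp only [ENNReal.toReal_zero, div_zero, zero_mul]
    exact integral_nonneg fun x => mul_self_nonneg _
  -- main case
  set κ := P r with hκdef
  have hstart' : ∀ x : X, κ x {ω | ω 0 = x} = 1 := hstart r hr
  have hshift' : ∀ (x : X) (S : Set (ℕ → X)), MeasurableSet S →
      κ x ((fun (ω : ℕ → X) (n : ℕ) => ω (n + 1)) ⁻¹' S) =
        (μ (Metric.ball x r))⁻¹ * ∫⁻ y in Metric.ball x r, κ y S ∂μ := hshift r hr
  -- basic facts about x ↦ μ (ball x r)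
  have hWr : MeasurableSet {p : X × X | dist p.1 p.2 < r} :=
    measurableSet_lt measurable_dist measurable_const
  have hgm : Measurable fun x => μ (Metric.ball x r) := by
    have h1 : ∀ x : X, Prod.mk x ⁻¹' {p : X × X | dist p.1 p.2 < r} = Metric.ball x r := by
      intro x; ext y; simp [Metric.mem_ball, dist_comm]
    have h2 := measurable_measure_prodMk_left (ν := μ) hWr
    simpa only [h1] using h2
  have hg0 : ∀ x : X, μ (Metric.ball x r) ≠ 0 := fun x => (Metric.measure_ball_pos μ x hr).ne'
  have hgt : ∀ x : X, μ (Metric.ball x r) ≠ ⊤ := fun x => measure_ne_top _ _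
  have hgR : ∀ x : X, 0 < (μ (Metric.ball x r)).toReal :=
    fun x => ENNReal.toReal_pos (hg0 x) (hgt x)
  -- the measure ν
  set ν : Measure X := muR μ r with hνdef
  have hgmN : Measurable fun x => (μ (Metric.ball x r)).toNNReal := hgm.ennreal_toNNReal
  have hν : ν = μ.withDensity fun x => ((μ (Metric.ball x r)).toNNReal : ℝ≥0∞) := by
    rw [hνdef, muR]
    congr 1
    funext x
    rw [ENNReal.coe_toNNReal (hgt x)]
  have hconv : ∀ φ : X → ℝ, ∫ x, φ x ∂ν = ∫ x, (μ (Metric.ball x r)).toReal * φ x ∂μ := by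
    intro φ
    rw [hν, integral_withDensity_eq_integral_smul hgmN]
    rfl
  have hconvInt : ∀ φ : X → ℝ, Integrable φ ν ↔
      Integrable (fun x => (μ (Metric.ball x r)).toReal * φ x) μ := by
    intro φ
    have hfun : (fun x => (μ (Metric.ball x r)).toReal * φ x)
        = fun x => (μ (Metric.ball x r)).toNNReal • φ x := rfl
    rw [hν, hfun]
    exact integrable_withDensity_iff_integrable_smul (μ := μ) hgmN (g := φ)
  have hνμ : ν ≪ μ := by rw [hνdef, muR]; exact withDensity_absolutelyContinuous μ _
  obtain ⟨δ, hδ0, hδle⟩ : ∃ δ : ℝ≥0∞, 0 < δ ∧ ∀ x : X, δ ≤ μ (Metric.ball x r) := by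
    obtain ⟨t, ht⟩ := IsCompact.elim_finite_subcover (isCompact_univ (X := X))
      (fun c : X => Metric.ball c (r / 2)) (fun c => Metric.isOpen_ball)
      (fun x _ => Set.mem_iUnion.2 ⟨x, Metric.mem_ball_self (by linarith)⟩)
    refine ⟨t.inf fun c => μ (Metric.ball c (r / 2)), ?_, ?_⟩
    · exact (Finset.lt_inf_iff ENNReal.zero_lt_top).mpr
        fun c _ => Metric.measure_ball_pos μ c (by linarith)
    · intro x
      obtain ⟨c, hct, hxc⟩ := Set.mem_iUnion₂.1 (ht (Set.mem_univ x))
      refine le_trans (Finset.inf_le hct) (measure_mono fun y hy => ?_)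
      rw [Metric.mem_ball] at hy ⊢
      rw [Metric.mem_ball] at hxc
      have := dist_triangle y c x
      have hcx : dist c x < r / 2 := by rw [dist_comm]; exact hxc
      linarith
  have hμν : μ ≪ ν := by
    refine Measure.AbsolutelyContinuous.mk fun s hs h0 => ?_
    have h1 : δ * μ s ≤ ν s := by
      rw [hνdef, muR, withDensity_apply _ hs]
      calc δ * μ s = ∫⁻ _ in s, δ ∂μ := by rw [setLIntegral_const, mul_comm]
        _ ≤ ∫⁻ x in s, μ (Metric.ball x r) ∂μ := lintegral_mono fun x => hδle x
    rw [h0, le_zero_iff] at h1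
    exact (mul_eq_zero.mp h1).resolve_left hδ0.ne'
  -- replace f by a measurable representative vanishing off B
  set f₁ : X → ℝ := hMem.1.mk f with hf₁def
  have hf₁m : StronglyMeasurable f₁ := hMem.1.stronglyMeasurable_mk
  set h : X → ℝ := B.indicator f₁ with hhdef
  have hhm : Measurable h := hf₁m.measurable.indicator hB
  have hfh : f =ᵐ[μ] h := by
    have h1 : f =ᵐ[μ] f₁ := hμν.ae_eq hMem.1.ae_eq_mk
    filter_upwards [h1, hvan] with x hx1 hx2
    by_cases hxB : x ∈ B
    · rw [hhdef]; rw [Set.indicator_of_mem hxB]; exact hx1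
    · rw [hhdef, Set.indicator_of_notMem hxB, hx2 hxB]
  have hfhν : f =ᵐ[ν] h := hνμ.ae_eq hfh
  have hh0 : ∀ x ∉ B, h x = 0 := fun x hx => Set.indicator_of_notMem hx _
  have hhL2 : MemLp h 2 ν := hMem.ae_eq hfhν
  have hksame : killedOp μ r B f = killedOp μ r B h := by
    funext x
    simp only [killedOp]
    congr 1
    funext x'
    congr 1
    exact integral_congr_ae (ae_restrict_of_ae hfh)
  have hgoal1 : ∫ x, f x ^ 2 ∂ν = ∫ x, h x ^ 2 ∂ν :=
    integral_congr_ae (hfhν.mono fun x hx => by simp [hx])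
  have hgoal2 : ∫ x, f x * (f x - killedOp μ r B f x) ∂ν
      = ∫ x, h x * (h x - killedOp μ r B h x) ∂ν := by
    rw [hksame]
    exact integral_congr_ae (hfhν.mono fun x hx => by simp [hx])
  rw [hgoal1, hgoal2]
  -- the expected exit time function
  set T : X → ℝ≥0∞ := fun x => ∑' k : ℕ, κ x {ω : ℕ → X | ∀ j ≤ k, ω j ∈ B} with hTdef
  have hTx : ∀ x : X, T x = ∑' k : ℕ, κ x {ω : ℕ → X | ∀ j ≤ k, ω j ∈ B} := fun _ => rfl
  have hTmeas : Measurable T := walk_T_meas κ hB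
  have hTleM : ∀ x ∈ B, T x ≤ maxExit κ B := fun x hx => walk_T_le_maxExit κ hB hx
  have hTne : ∀ x : X, T x ≠ ⊤ := by
    intro x
    by_cases hx : x ∈ B
    · exact ne_top_of_le_ne_top hMtop (hTleM x hx)
    · rw [hTx x, walk_T_zero κ hstart' hx]
      exact ENNReal.zero_ne_top
  set E : X → ℝ := fun x => (T x).toReal with hEdef
  have hEx : ∀ x : X, E x = (T x).toReal := fun _ => rfl
  have hEmeas : Measurable E := hTmeas.ennreal_toReal
  have hE1 : ∀ x ∈ B, 1 ≤ E x := by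
    intro x hx
    have h2 : (1 : ℝ≥0∞) ≤ T x := walk_T_one κ hstart' hx
    have h1 := ENNReal.toReal_mono (hTne x) h2
    simpa using h1
  have hE0 : ∀ x ∉ B, E x = 0 := by
    intro x hx
    rw [hEx x, hTx x, walk_T_zero κ hstart' hx, ENNReal.toReal_zero]
  set M' : ℝ := (maxExit κ B).toReal with hM'def
  have hEM : ∀ x ∈ B, E x ≤ M' := fun x hx => ENNReal.toReal_mono hMtop (hTleM x hx)
  have hM'1 : 1 ≤ M' := by
    obtain ⟨x, hx⟩ := hBne
    exact le_trans (hE1 x hx) (hEM x hx)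
  have hM'0 : 0 < M' := lt_of_lt_of_le one_pos hM'1
  have hEnonneg : ∀ x : X, 0 ≤ E x := fun x => ENNReal.toReal_nonneg
  -- the key identity for E on B
  have hkey : ∀ x ∈ B, ∫ y in Metric.ball x r ∩ B, E y ∂μ
      = (μ (Metric.ball x r)).toReal * (E x - 1) := by
    intro x hx
    have hrec : μ (Metric.ball x r) * T x =
        μ (Metric.ball x r) + ∫⁻ y in Metric.ball x r, T y ∂μ := by
      rw [hTx x]
      have := walk_T_rec μ κ r hB hr hstart' hshift' hx
      convert this using 2
    set L : ℝ≥0∞ := ∫⁻ y in Metric.ball x r, T y ∂μ with hLdef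
    have hLne : L ≠ ⊤ := by
      intro hLtop
      have h1 : μ (Metric.ball x r) + L = ⊤ := by simp [hLtop]
      rw [← hrec] at h1
      exact ENNReal.mul_ne_top (hgt x) (hTne x) h1
    have hTind : ∀ y : X, T y = B.indicator T y := by
      intro y
      by_cases hy : y ∈ B
      · rw [Set.indicator_of_mem hy]
      · rw [Set.indicator_of_notMem hy, hTx y, walk_T_zero κ hstart' hy]
    have hLB : L = ∫⁻ y in Metric.ball x r ∩ B, T y ∂μ := by
      rw [hLdef, lintegral_congr hTind, setLIntegral_indicator hB, Set.inter_comm]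
    have hreal : ∫ y in Metric.ball x r ∩ B, E y ∂μ = L.toReal := by
      rw [hLB, ← integral_toReal (hTmeas.aemeasurable.restrict)
        (Filter.Eventually.of_forall fun y => lt_top_iff_ne_top.2 (hTne y))]
    have htR := congrArg ENNReal.toReal hrec
    rw [ENNReal.toReal_mul, ENNReal.toReal_add (hgt x) hLne] at htR
    rw [hreal]
    have hEeq : (T x).toReal = E x := rfl
    rw [hEeq] at htR
    ring_nf
    ring_nf at htR
    linarith
  -- product space setup
  set W : Set (X × X) := {p : X × X | p.1 ∈ B ∧ p.2 ∈ B ∧ dist p.1 p.2 < r} with hWdef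
  have hWmeas : MeasurableSet W := by
    have h1 : W = (B ×ˢ B) ∩ {p : X × X | dist p.1 p.2 < r} := by
      ext p
      simp only [hWdef, Set.mem_setOf_eq, Set.mem_inter_iff, Set.mem_prod]
      tauto
    rw [h1]
    exact (hB.prod hB).inter hWr
  have hWswap : ∀ p : X × X, p.swap ∈ W ↔ p ∈ W := by
    intro p
    constructor
    · rintro ⟨h1, h2, h3⟩
      exact ⟨h2, h1, by rwa [dist_comm] at h3⟩
    · rintro ⟨h1, h2, h3⟩
      exact ⟨h2, h1, by rwa [dist_comm] at h3⟩
  set F : X × X → ℝ := W.indicator (fun p => h p.1 * h p.2) with hFdef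
  set G : X × X → ℝ := W.indicator (fun p => h p.1 ^ 2 * (E p.2 / E p.1)) with hGdef
  set Φ : X × X → ℝ := W.indicator (fun p => h p.1 ^ 2) with hPdef
  have hsq : Integrable (fun x => h x ^ 2) ν := hhL2.integrable_sq
  have hsqlt : ∫⁻ x, (‖h x‖₊ : ℝ≥0∞) ^ 2 ∂ν < ⊤ := by
    have h1 : ∫⁻ x, (‖h x ^ 2‖₊ : ℝ≥0∞) ∂ν < ⊤ := hsq.2
    have h2 : ∀ x : X, (‖h x‖₊ : ℝ≥0∞) ^ 2 = (‖h x ^ 2‖₊ : ℝ≥0∞) := by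
      intro x
      rw [nnnorm_pow, ENNReal.coe_pow]
    rw [lintegral_congr h2]
    exact h1
  have hPmeas : Measurable Φ := ((hhm.comp measurable_fst).pow_const 2).indicator hWmeas
  have hPfin : ∫⁻ p, (‖Φ p‖₊ : ℝ≥0∞) ∂(μ.prod μ) < ⊤ := by
    have h1 : ∀ p : X × X, (‖Φ p‖₊ : ℝ≥0∞) =
        W.indicator (fun p : X × X => (‖h p.1‖₊ : ℝ≥0∞) ^ 2) p := by
      intro p
      rw [hPdef]
      by_cases hp : p ∈ W
      · rw [Set.indicator_of_mem hp, Set.indicator_of_mem hp, nnnorm_pow, ENNReal.coe_pow]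
      · rw [Set.indicator_of_notMem hp, Set.indicator_of_notMem hp]
        simp
    rw [lintegral_congr h1]
    have hmeas2 : Measurable fun p : X × X =>
        W.indicator (fun p : X × X => (‖h p.1‖₊ : ℝ≥0∞) ^ 2) p :=
      ((hhm.nnnorm.coe_nnreal_ennreal.comp measurable_fst).pow_const 2).indicator hWmeas
    rw [lintegral_prod _ hmeas2.aemeasurable]
    have hle1 : ∫⁻ x, ∫⁻ y, W.indicator (fun p : X × X => (‖h p.1‖₊ : ℝ≥0∞) ^ 2) (x, y) ∂μ ∂μ
        ≤ ∫⁻ x, (‖h x‖₊ : ℝ≥0∞) ^ 2 * μ (Metric.ball x r) ∂μ := by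
      refine lintegral_mono fun x => ?_
      have h3 : ∀ y : X, W.indicator (fun p : X × X => (‖h p.1‖₊ : ℝ≥0∞) ^ 2) (x, y)
          ≤ (Metric.ball x r).indicator (fun _ => (‖h x‖₊ : ℝ≥0∞) ^ 2) y := by
        intro y
        by_cases hxy : (x, y) ∈ W
        · rw [Set.indicator_of_mem hxy, Set.indicator_of_mem
            (by rw [Metric.mem_ball, dist_comm]; exact hxy.2.2)]
        · rw [Set.indicator_of_notMem hxy]
          exact zero_le
      calc ∫⁻ y, W.indicator (fun p : X × X => (‖h p.1‖₊ : ℝ≥0∞) ^ 2) (x, y) ∂μ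
          ≤ ∫⁻ y, (Metric.ball x r).indicator (fun _ => (‖h x‖₊ : ℝ≥0∞) ^ 2) y ∂μ :=
            lintegral_mono h3
        _ = (‖h x‖₊ : ℝ≥0∞) ^ 2 * μ (Metric.ball x r) := by
            rw [lintegral_indicator measurableSet_ball, setLIntegral_const]
    have heq2 : ∫⁻ x, (‖h x‖₊ : ℝ≥0∞) ^ 2 * μ (Metric.ball x r) ∂μ
        = ∫⁻ x, (‖h x‖₊ : ℝ≥0∞) ^ 2 ∂ν := by
      rw [hνdef, muR, lintegral_withDensity_eq_lintegral_mul μ hgm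
        ((hhm.nnnorm.coe_nnreal_ennreal).pow_const 2)]
      refine lintegral_congr fun x => ?_
      simp [Pi.mul_apply, mul_comm]
    exact lt_of_le_of_lt (le_trans hle1 (le_of_eq heq2)) hsqlt
  have hPint : Integrable Φ (μ.prod μ) := ⟨hPmeas.aestronglyMeasurable, hPfin⟩
  have hPswap_eq : ∀ p : X × X, Φ p.swap = W.indicator (fun p : X × X => h p.2 ^ 2) p := by
    intro p
    rw [hPdef]
    by_cases hp : p ∈ W
    · rw [Set.indicator_of_mem ((hWswap p).mpr hp), Set.indicator_of_mem hp]
      simp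
    · rw [Set.indicator_of_notMem (fun c => hp ((hWswap p).mp c)), Set.indicator_of_notMem hp]
  have hPswapint : Integrable (fun p : X × X => Φ p.swap) (μ.prod μ) := hPint.swap
  have hFmeas : Measurable F :=
    ((hhm.comp measurable_fst).mul (hhm.comp measurable_snd)).indicator hWmeas
  have hFbnd : ∀ p : X × X, ‖F p‖ ≤ Φ p + Φ p.swap := by
    intro p
    rw [hPswap_eq p, hFdef, hPdef]
    by_cases hp : p ∈ W
    · rw [Set.indicator_of_mem hp, Set.indicator_of_mem hp, Set.indicator_of_mem hp,
        Real.norm_eq_abs]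
      nlinarith [sq_nonneg (|h p.1| - |h p.2|), sq_abs (h p.1), sq_abs (h p.2),
        abs_nonneg (h p.1), abs_nonneg (h p.2), abs_mul (h p.1) (h p.2),
        abs_nonneg (h p.1 * h p.2)]
    · rw [Set.indicator_of_notMem hp, Set.indicator_of_notMem hp, Set.indicator_of_notMem hp]
      simp
  have hFint : Integrable F (μ.prod μ) :=
    (hPint.add hPswapint).mono' hFmeas.aestronglyMeasurable (Filter.Eventually.of_forall hFbnd)
  have hGmeas : Measurable G :=
    (((hhm.comp measurable_fst).pow_const 2).mul
      ((hEmeas.comp measurable_snd).div (hEmeas.comp measurable_fst))).indicator hWmeas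
  have hGbnd : ∀ p : X × X, ‖G p‖ ≤ M' * Φ p := by
    intro p
    rw [hGdef, hPdef]
    by_cases hp : p ∈ W
    · rw [Set.indicator_of_mem hp, Set.indicator_of_mem hp]
      have h1 : 0 ≤ E p.2 / E p.1 := div_nonneg (hEnonneg _) (hEnonneg _)
      have h2 : E p.2 / E p.1 ≤ M' :=
        le_trans (div_le_self (hEnonneg _) (hE1 _ hp.1)) (hEM _ hp.2.1)
      rw [Real.norm_eq_abs, abs_of_nonneg (mul_nonneg (sq_nonneg _) h1)]
      calc h p.1 ^ 2 * (E p.2 / E p.1) ≤ h p.1 ^ 2 * M' :=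
            mul_le_mul_of_nonneg_left h2 (sq_nonneg _)
        _ = M' * h p.1 ^ 2 := mul_comm _ _
    · rw [Set.indicator_of_notMem hp, Set.indicator_of_notMem hp]
      simp
  have hGint : Integrable G (μ.prod μ) :=
    (hPint.const_mul M').mono' hGmeas.aestronglyMeasurable (Filter.Eventually.of_forall hGbnd)
  have hGswapint : Integrable (fun p : X × X => G p.swap) (μ.prod μ) := hGint.swap
  have hFG : ∀ p : X × X, F p ≤ (G p + G p.swap) / 2 := by
    intro p
    by_cases hp : p ∈ W
    · have hps : p.swap ∈ W := (hWswap p).mpr hp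
      rw [hFdef, hGdef, Set.indicator_of_mem hp, Set.indicator_of_mem hp,
        Set.indicator_of_mem hps]
      exact amgm_aux (h p.1) (h p.2) (E p.1) (E p.2) (hE1 _ hp.1) (hE1 _ hp.2.1)
    · have hps : p.swap ∉ W := fun c => hp ((hWswap p).mp c)
      rw [hFdef, hGdef, Set.indicator_of_notMem hp, Set.indicator_of_notMem hp,
        Set.indicator_of_notMem hps]
      simp
  have hswap_eq : ∫ p, G p.swap ∂(μ.prod μ) = ∫ p, G p ∂(μ.prod μ) := integral_prod_swap G
  have hF_le_G : ∫ p, F p ∂(μ.prod μ) ≤ ∫ p, G p ∂(μ.prod μ) := by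
    have h1 : ∫ p, F p ∂(μ.prod μ) ≤ ∫ p, (G p + G p.swap) / 2 ∂(μ.prod μ) :=
      integral_mono hFint ((hGint.add hGswapint).div_const 2) hFG
    rwa [integral_div, integral_add hGint hGswapint, hswap_eq, add_self_div_two] at h1
  -- identification of the inner products
  have hpt : ∀ x : X, (μ (Metric.ball x r)).toReal * (h x * killedOp μ r B h x)
      = ∫ y, F (x, y) ∂μ := by
    intro x
    by_cases hx : x ∈ B
    · have hFx : ∀ y : X, F (x, y) = (Metric.ball x r ∩ B).indicator (fun y => h x * h y) y := by
        intro y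
        rw [hFdef]
        by_cases hy : y ∈ Metric.ball x r ∩ B
        · have hyW : (x, y) ∈ W :=
            ⟨hx, hy.2, by rw [dist_comm]; exact Metric.mem_ball.mp hy.1⟩
          rw [Set.indicator_of_mem hy, Set.indicator_of_mem hyW]
        · rw [Set.indicator_of_notMem hy, Set.indicator_of_notMem]
          intro c
          exact hy ⟨Metric.mem_ball.mpr (by rw [dist_comm]; exact c.2.2), c.2.1⟩
      rw [integral_congr_ae (Filter.Eventually.of_forall hFx),
        integral_indicator (measurableSet_ball.inter hB), integral_const_mul]
      simp only [killedOp, Set.indicator_of_mem hx]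
      have hne : (μ (Metric.ball x r)).toReal ≠ 0 := (hgR x).ne'
      field_simp
    · have hFx : ∀ y : X, F (x, y) = 0 := fun y => by
        rw [hFdef, Set.indicator_of_notMem (fun c => hx c.1)]
      rw [integral_congr_ae (Filter.Eventually.of_forall hFx), integral_zero]
      simp only [killedOp, Set.indicator_of_notMem hx]
      ring
  have hIeq : ∫ x, h x * killedOp μ r B h x ∂ν = ∫ p, F p ∂(μ.prod μ) := by
    rw [hconv, integral_prod F hFint]
    exact integral_congr_ae (Filter.Eventually.of_forall hpt)
  have hIint : Integrable (fun x => h x * killedOp μ r B h x) ν := by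
    rw [hconvInt]
    exact (hFint.integral_prod_left).congr (Filter.Eventually.of_forall fun x => (hpt x).symm)
  -- the inner integral of G
  have hptG : ∀ x : X, (∫ y, G (x, y) ∂μ)
      = B.indicator (fun x => (μ (Metric.ball x r)).toReal * h x ^ 2 * (1 - (E x)⁻¹)) x := by
    intro x
    by_cases hx : x ∈ B
    · have hGx : ∀ y : X, G (x, y) = (Metric.ball x r ∩ B).indicator
          (fun y => h x ^ 2 / E x * E y) y := by
        intro y
        rw [hGdef]
        by_cases hy : y ∈ Metric.ball x r ∩ B
        · have hyW : (x, y) ∈ W :=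
            ⟨hx, hy.2, by rw [dist_comm]; exact Metric.mem_ball.mp hy.1⟩
          rw [Set.indicator_of_mem hy, Set.indicator_of_mem hyW]
          ring
        · rw [Set.indicator_of_notMem hy, Set.indicator_of_notMem]
          intro c
          exact hy ⟨Metric.mem_ball.mpr (by rw [dist_comm]; exact c.2.2), c.2.1⟩
      rw [integral_congr_ae (Filter.Eventually.of_forall hGx),
        integral_indicator (measurableSet_ball.inter hB), integral_const_mul, hkey x hx,
        Set.indicator_of_mem hx]
      have hEne : E x ≠ 0 := (lt_of_lt_of_le one_pos (hE1 x hx)).ne'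
      field_simp
    · have hGx : ∀ y : X, G (x, y) = 0 := fun y => by
        rw [hGdef, Set.indicator_of_notMem (fun c => hx c.1)]
      rw [integral_congr_ae (Filter.Eventually.of_forall hGx), integral_zero,
        Set.indicator_of_notMem hx]
  have hsqg : Integrable (fun x => (μ (Metric.ball x r)).toReal * h x ^ 2) μ :=
    (hconvInt _).mp hsq
  have hGbound : ∫ p, G p ∂(μ.prod μ) ≤ (1 - 1 / M') * ∫ x, h x ^ 2 ∂ν := by
    rw [integral_prod G hGint]
    have hL : Integrable (fun x => ∫ y, G (x, y) ∂μ) μ := hGint.integral_prod_left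
    have hR : Integrable (fun x => (1 - 1 / M') * ((μ (Metric.ball x r)).toReal * h x ^ 2)) μ :=
      hsqg.const_mul _
    have hmono : ∀ x : X, (∫ y, G (x, y) ∂μ)
        ≤ (1 - 1 / M') * ((μ (Metric.ball x r)).toReal * h x ^ 2) := by
      intro x
      rw [hptG x]
      by_cases hx : x ∈ B
      · rw [Set.indicator_of_mem hx]
        have hEx1 : 1 ≤ E x := hE1 x hx
        have hEx0 : 0 < E x := lt_of_lt_of_le one_pos hEx1
        have h2 : 1 / M' ≤ 1 / E x := one_div_le_one_div_of_le hEx0 (hEM x hx)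
        have h3 : 1 - (E x)⁻¹ ≤ 1 - 1 / M' := by
          rw [← one_div]
          linarith
        calc (μ (Metric.ball x r)).toReal * h x ^ 2 * (1 - (E x)⁻¹)
            ≤ (μ (Metric.ball x r)).toReal * h x ^ 2 * (1 - 1 / M') :=
              mul_le_mul_of_nonneg_left h3 (mul_nonneg ENNReal.toReal_nonneg (sq_nonneg _))
          _ = (1 - 1 / M') * ((μ (Metric.ball x r)).toReal * h x ^ 2) := by ring
      · rw [Set.indicator_of_notMem hx, hh0 x hx]
        simp
    calc ∫ x, ∫ y, G (x, y) ∂μ ∂μ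
        ≤ ∫ x, (1 - 1 / M') * ((μ (Metric.ball x r)).toReal * h x ^ 2) ∂μ :=
          integral_mono hL hR hmono
      _ = (1 - 1 / M') * ∫ x, (μ (Metric.ball x r)).toReal * h x ^ 2 ∂μ := integral_const_mul _ _
      _ = (1 - 1 / M') * ∫ x, h x ^ 2 ∂ν := by rw [← hconv]
  -- put everything together
  have hsub : ∫ x, h x * (h x - killedOp μ r B h x) ∂ν
      = ∫ x, h x ^ 2 ∂ν - ∫ x, h x * killedOp μ r B h x ∂ν := by
    rw [← integral_sub hsq hIint]
    exact integral_congr_ae (Filter.Eventually.of_forall fun x => by ring)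
  have hIle : ∫ x, h x * killedOp μ r B h x ∂ν ≤ (1 - 1 / M') * ∫ x, h x ^ 2 ∂ν := by
    rw [hIeq]
    exact le_trans hF_le_G hGbound
  have hS0 : 0 ≤ ∫ x, h x ^ 2 ∂ν := integral_nonneg fun x => sq_nonneg _
  rw [hsub]
  have hexp : (1 - 1 / M') * ∫ x, h x ^ 2 ∂ν
      = ∫ x, h x ^ 2 ∂ν - 1 / M' * ∫ x, h x ^ 2 ∂ν := by ring
  linarith [hIle, hexp]
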